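/- Let A be a finite set, let e, f⁻, f⁺ : A → [0,∞) and M⁻, M⁺ : A × A → [0,∞), set f = f⁻ + f⁺ and M = M⁻ + M⁺, and let S⁻ = S(A, e, f⁻, M⁻). Define ê, f̂ on A \ S⁻ by f̂(a) = f⁺(a) + ∑_{b∈S⁻} M⁺(b,a) and ê(a) = e(a) − f⁻(a) − ∑_{b∈S⁻} M⁻(b,a), let M̂ be the restriction of M to (A \ S⁻) × (A \ S⁻), and let T⁺ be the map on subsets of A \ S⁻ built from (ê, f̂, M̂) and T the map on subsets of A built from (e, f, M). Then for every B ⊆ A \ S⁻ one has T⁺(B) = T(B ∪ S⁻) \ S⁻. -/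
import Mathlib


open scoped Classical

/-- The map `T(B) = {a ∈ A : f(a) + ∑_{b ∈ B} M(b,a) > e(a)}` on subsets of a finite set `A`. -/
noncomputable def Tmap {A : Type*} [Fintype A] (e f : A → ℝ) (M : A → A → ℝ)
    (B : Finset A) : Finset A :=
  Finset.univ.filter (fun a => e a < f a + ∑ b ∈ B, M b a)

/-- `S` is the smallest fixed point of `T`. -/
def IsSmallestFP {A : Type*} (T : Finset A → Finset A) (S : Finset A) : Prop :=
  T S = S ∧ ∀ S' : Finset A, T S' = S' → S ⊆ S'

theorem Tplus_eq_T_union_sdiff {A : Type*} [Fintype A] [DecidableEq A]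
    (e fm fp : A → ℝ) (Mm Mp : A → A → ℝ)
    (he : ∀ a, 0 ≤ e a)
    (hfm : ∀ a, 0 ≤ fm a) (hfp : ∀ a, 0 ≤ fp a)
    (hMm : ∀ b a, 0 ≤ Mm b a) (hMp : ∀ b a, 0 ≤ Mp b a)
    -- `S⁻` is the smallest fixed point for the data `(e, f⁻, M⁻)`
    (Sm : Finset A)
    (hSm : IsSmallestFP (Tmap e fm Mm) Sm) :
    -- for every `B ⊆ A \ S⁻`, one has `T⁺(B) = T(B ∪ S⁻) \ S⁻`
    ∀ B : Finset {a : A // a ∉ Sm},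
      (Tmap (fun a => e a.1 - fm a.1 - ∑ b ∈ Sm, Mm b a.1)
            (fun a => fp a.1 + ∑ b ∈ Sm, Mp b a.1)
            (fun b a => Mm b.1 a.1 + Mp b.1 a.1) B).image Subtype.val
        = Tmap e (fun a => fm a + fp a) (fun b a => Mm b a + Mp b a)
            (B.image Subtype.val ∪ Sm) \ Sm := by
  intro B
  have hdisj : Disjoint (B.image Subtype.val) Sm := by
    rw [Finset.disjoint_left]
    rintro a ha
    simp only [Finset.mem_image] at ha
    obtain ⟨x, -, rfl⟩ := ha
    exact x.2
  ext a
  simp only [Tmap, Finset.mem_sdiff, Finset.mem_image, Finset.mem_filter, Finset.mem_univ,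
    true_and]
  constructor
  · rintro ⟨x, hx, rfl⟩
    refine ⟨?_, x.2⟩
    rw [Finset.sum_union hdisj, Finset.sum_image (fun b _ c _ h => Subtype.val_injective h)]
    have := hx
    linarith [Finset.sum_add_distrib (s := Sm) (f := fun b => Mm b x.1) (g := fun b => Mp b x.1)]
  · rintro ⟨ha, haS⟩
    refine ⟨⟨a, haS⟩, ?_, rfl⟩
    rw [Finset.sum_union hdisj, Finset.sum_image (fun b _ c _ h => Subtype.val_injective h)] at ha
    have := Finset.sum_add_distrib (s := Sm) (f := fun b => Mm b a) (g := fun b => Mp b a)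
    simp only []
    linarith
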